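/- Trace of the gamma map: for any (d+1)×(d+1) matrix X and degree N, tr Γ(X) = C(N+d, d+1) · tr X, where C denotes the binomial coefficient. -/

import Mathlib

open MvPolynomial Matrix BigOperators

/-- Multi-indices of `d+1` entries with total degree `N`. -/
abbrev MIdx (d N : ℕ) := {m : Fin (d+1) → ℕ // ∑ i, m i = N}

instance (d N : ℕ) : Fintype (MIdx d N) :=
  Fintype.subtype (Finset.Nat.antidiagonalTuple (d+1) N)
    (fun _ => Finset.Nat.mem_antidiagonalTuple)

/-- The `(m,n)` matrix element of the symmetric power of `A`:
the coefficient of `x^n` in `(Ax)^m`. -/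
noncomputable def symPowEntry {R : Type} [CommSemiring R] {d : ℕ}
    (A : Matrix (Fin (d+1)) (Fin (d+1)) R) (m n : Fin (d+1) → ℕ) : R :=
  MvPolynomial.coeff (Finsupp.equivFunOnFinite.symm n)
    (∏ i, (∑ j, MvPolynomial.C (A i j) * MvPolynomial.X j) ^ m i)

/-- The `N`-th symmetric power of `A`, as a matrix indexed by multi-indices
of total degree `N`. -/
noncomputable def symPow {R : Type} [CommSemiring R] (d N : ℕ)
    (A : Matrix (Fin (d+1)) (Fin (d+1)) R) : Matrix (MIdx d N) (MIdx d N) R :=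
  fun m n => symPowEntry A m.1 n.1

/-- `Γ(g)_{mn}`: the coefficient of `x^n` in `(Σ_{μ,λ} g_{μλ} x_λ ∂_μ) x^m`. -/
noncomputable def gammaEntry {d : ℕ} (g : Matrix (Fin (d+1)) (Fin (d+1)) ℂ)
    (m n : Fin (d+1) → ℕ) : ℂ :=
  MvPolynomial.coeff (Finsupp.equivFunOnFinite.symm n)
    (∑ μ, ∑ lam, MvPolynomial.C (g μ lam) *
      (MvPolynomial.X lam * MvPolynomial.pderiv μ
        (MvPolynomial.monomial (Finsupp.equivFunOnFinite.symm m) 1)))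

/-- The degree-`N` generator `Γ(g)` of the symmetric representation. -/
noncomputable def gammaMat (d N : ℕ) (g : Matrix (Fin (d+1)) (Fin (d+1)) ℂ) :
    Matrix (MIdx d N) (MIdx d N) ℂ :=
  fun m n => gammaEntry g m.1 n.1

/-- The diagonal matrix `B` of multinomial coefficients of degree `N`. -/
noncomputable def multinomMat (d N : ℕ) : Matrix (MIdx d N) (MIdx d N) ℂ :=
  Matrix.diagonal fun m => (Nat.multinomial Finset.univ m.1 : ℂ)

section Aux
open Finset BigOperators

lemma card_piAntidiag_cons {ι : Type*} [DecidableEq ι] :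
    ∀ (s : Finset ι) {i : ι} (hi : i ∉ s) (n : ℕ),
      ((Finset.cons i s hi).piAntidiag n).card = (n + s.card).choose s.card := by
  intro s
  induction s using Finset.cons_induction with
  | empty =>
    intro i hi n
    rw [piAntidiag_cons]
    have h1 : Finset.filter (fun x : ℕ × ℕ => x.2 = 0) (antidiagonal n) = {(n, 0)} := by
      ext ⟨a, b⟩
      simp only [mem_filter, Finset.HasAntidiagonal.mem_antidiagonal, mem_singleton, Prod.mk.injEq]
      omega
    simp [Finset.card_disjiUnion, piAntidiag_empty, apply_ite Finset.card, ← Finset.sum_filter, h1]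
  | cons j t hj IH =>
    intro i hi n
    rw [piAntidiag_cons, Finset.card_disjiUnion]
    simp only [Finset.card_map, IH]
    rw [Finset.Nat.sum_antidiagonal_eq_sum_range_succ_mk]
    have h2 : ∑ x ∈ range (n+1), (n - x + #t).choose #t
        = ∑ x ∈ range (n+1), (x + #t).choose #t := by
      rw [← Finset.sum_range_reflect]
      apply Finset.sum_congr rfl
      intro x hx
      simp only [Finset.mem_range] at hx
      congr 2
      omega
    simp only [Nat.succ_eq_add_one] at *
    rw [h2, Nat.sum_range_add_choose]
    rw [Finset.card_cons, ← add_assoc]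

lemma card_piAntidiag_univ (d N : ℕ) :
    ((Finset.univ : Finset (Fin (d+1))).piAntidiag N).card = (N + d).choose d := by
  have huniv : (Finset.univ : Finset (Fin (d+1)))
      = Finset.cons 0 (Finset.univ.erase 0) (Finset.notMem_erase _ _) := by
    rw [Finset.cons_eq_insert, Finset.insert_erase (Finset.mem_univ 0)]
  rw [huniv, card_piAntidiag_cons]
  have hc : (Finset.univ.erase (0 : Fin (d+1))).card = d := by
    rw [Finset.card_erase_of_mem (Finset.mem_univ 0), Finset.card_univ, Fintype.card_fin]
    omega
  rw [hc]

lemma sum_coord_swap (d N : ℕ) (i : Fin (d+1)) :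
    ∑ m ∈ (Finset.univ : Finset (Fin (d+1))).piAntidiag N, m i
      = ∑ m ∈ (Finset.univ : Finset (Fin (d+1))).piAntidiag N, m 0 := by
  apply Finset.sum_nbij' (fun m => m ∘ Equiv.swap i 0) (fun m => m ∘ Equiv.swap i 0)
  · intro m hm
    simp only [Finset.mem_piAntidiag] at hm ⊢
    refine ⟨?_, fun j _ => Finset.mem_univ j⟩
    rw [← hm.1]
    exact Fintype.sum_equiv (Equiv.swap i 0) _ _ (fun j => rfl)
  · intro m hm
    simp only [Finset.mem_piAntidiag] at hm ⊢
    refine ⟨?_, fun j _ => Finset.mem_univ j⟩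
    rw [← hm.1]
    exact Fintype.sum_equiv (Equiv.swap i 0) _ _ (fun j => rfl)
  · intro m _; funext j; simp [Function.comp]
  · intro m _; funext j; simp [Function.comp]
  · intro m _; simp [Function.comp, Equiv.swap_apply_left]

lemma sum_coord (d N : ℕ) (i : Fin (d+1)) :
    ∑ m ∈ (Finset.univ : Finset (Fin (d+1))).piAntidiag N, m i = (N + d).choose (d+1) := by
  have key : (d+1) * (∑ m ∈ (Finset.univ : Finset (Fin (d+1))).piAntidiag N, m 0)
      = N * (N + d).choose d := by
    calc (d+1) * (∑ m ∈ (Finset.univ : Finset (Fin (d+1))).piAntidiag N, m 0)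
        = ∑ j : Fin (d+1), ∑ m ∈ (Finset.univ : Finset (Fin (d+1))).piAntidiag N, m j := by
          rw [Finset.sum_congr rfl (fun j _ => sum_coord_swap d N j)]
          simp [Finset.sum_const, mul_comm]
      _ = ∑ m ∈ (Finset.univ : Finset (Fin (d+1))).piAntidiag N, ∑ j, m j :=
          Finset.sum_comm
      _ = N * (N + d).choose d := by
          rw [← card_piAntidiag_univ d N, Finset.sum_congr rfl (fun m hm => ?_),
            Finset.sum_const, smul_eq_mul, mul_comm]
          exact (Finset.mem_piAntidiag.mp hm).1
  rw [sum_coord_swap d N i]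
  have h2 : (N + d).choose (d+1) * (d+1) = (N + d).choose d * N := by
    rw [Nat.choose_succ_right_eq, Nat.add_sub_cancel]
  have h3 : (d+1) * ((N + d).choose (d+1))
      = (d+1) * (∑ m ∈ (Finset.univ : Finset (Fin (d+1))).piAntidiag N, m 0) := by
    rw [key, Nat.mul_comm (d+1) ((N+d).choose (d+1)), h2, Nat.mul_comm]
  exact (Nat.eq_of_mul_eq_mul_left (Nat.succ_pos d) h3).symm

end Aux

lemma gammaEntry_diag {d : ℕ} (g : Matrix (Fin (d+1)) (Fin (d+1)) ℂ)
    (m : Fin (d+1) → ℕ) : gammaEntry g m m = ∑ i, (m i : ℂ) * g i i := by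
  set σ : Fin (d+1) →₀ ℕ := Finsupp.equivFunOnFinite.symm m with hσ
  have hσa : ∀ j, σ j = m j := fun j => rfl
  unfold gammaEntry
  rw [MvPolynomial.coeff_sum]
  rw [Finset.sum_congr rfl (fun μ _ => MvPolynomial.coeff_sum _ _ _)]
  have hterm : ∀ μ lam : Fin (d+1),
      MvPolynomial.coeff σ (MvPolynomial.C (g μ lam) *
        (MvPolynomial.X lam * MvPolynomial.pderiv μ (MvPolynomial.monomial σ 1)))
      = if lam = μ then (m μ : ℂ) * g μ μ else 0 := by
    intro μ lam
    rw [MvPolynomial.pderiv_monomial]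
    rw [MvPolynomial.X, MvPolynomial.monomial_mul, MvPolynomial.C_mul_monomial]
    rw [MvPolynomial.coeff_monomial]
    rcases Nat.eq_zero_or_pos (m μ) with h0 | hpos
    · simp [hσa, h0]
    · have hc : ((fun₀ | lam => (1:ℕ)) + (σ - fun₀ | μ => 1)) = σ ↔ lam = μ := by
        constructor
        · intro h
          by_contra hne
          have h2 := DFunLike.congr_fun h lam
          simp [Finsupp.single_apply, hne, hσa] at h2
        · rintro rfl
          ext j
          simp only [Finsupp.add_apply, Finsupp.tsub_apply, Finsupp.single_apply]
          rcases eq_or_ne lam j with h3 | h3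
          · subst h3
            simp [hσa]
            omega
          · simp [h3]
      rw [if_congr hc rfl rfl]
      by_cases h : lam = μ
      · subst h
        simp [hσa]
        ring
      · simp [h]
  rw [Finset.sum_congr rfl (fun μ _ => Finset.sum_congr rfl (fun lam _ => hterm μ lam))]
  simp [Finset.sum_ite_eq']


theorem gamma_trace (d N : ℕ) (X : Matrix (Fin (d+1)) (Fin (d+1)) ℂ) :
    (gammaMat d N X).trace = ((N + d).choose (d+1) : ℂ) * X.trace := by
  have hmem : ∀ x : Fin (d+1) → ℕ,
      x ∈ (Finset.univ : Finset (Fin (d+1))).piAntidiag N ↔ (∑ i, x i) = N := by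
    intro x
    simp [Finset.mem_piAntidiag]
  have h1 : (gammaMat d N X).trace
      = ∑ m ∈ (Finset.univ : Finset (Fin (d+1))).piAntidiag N, ∑ i, (m i : ℂ) * X i i := by
    rw [Matrix.trace, Finset.sum_subtype _ hmem (fun m => ∑ i, (m i : ℂ) * X i i)]
    apply Finset.sum_congr rfl
    intro m _
    exact gammaEntry_diag X m.1
  rw [h1, Finset.sum_comm, Matrix.trace, Finset.mul_sum]
  apply Finset.sum_congr rfl
  intro i _
  rw [← Finset.sum_mul]
  congr 1
  rw [← Nat.cast_sum, sum_coord d N i]
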